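/- Let n ≥ 0 and let w be a reduced word using letters from {1,…,n} and placeholders. Among all words obtained from w by inserting the letter n+1 at some position, the word obtained by inserting n+1 immediately to the right of the rightmost placeholder of w (if w contains a placeholder) and at the left end of w (otherwise) is the unique minimal one with respect to the right-to-left lexicographic order in which ε is greater than every letter. (This identifies the two descriptions of the insertion maps f_n^i: the minimal-order-type description and the explicit insertion rule.) -/

import Mathlib

/-- A word: a finite sequence of letters (`some a` for a positive integer `a`) and
placeholders (`none` for `ε`), written left to right (and read right to left). -/
abbrev Word : Type := List (Option ℕ+)

/-- A word is reduced if it has no two consecutive placeholders. -/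
def WordReduced (w : Word) : Prop :=
  List.Chain' (fun a b => ¬(a = none ∧ b = none)) w

/-- Auxiliary insertion, acting on the reversed (reading-order) word: insert the
letter `x` immediately before the first placeholder, or at the very end if there
is no placeholder. -/
def insertAux (x : ℕ+) : List (Option ℕ+) → List (Option ℕ+)
  | [] => [some x]
  | none :: rest => some x :: none :: rest
  | a :: rest => a :: insertAux x rest

/-- Insert the letter `x` into a word: immediately to the right of the rightmost
placeholder if the word contains one, and at the left end otherwise. -/
def insertLetter (x : ℕ+) (w : Word) : Word :=
  (insertAux x w.reverse).reverse

/-- The order on symbols: letters are ordered as integers, and the placeholder `ε`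
is greater than every letter. -/
def SymbLt : Option ℕ+ → Option ℕ+ → Prop
  | some a, some b => a < b
  | some _, none => True
  | none, _ => False

/-- The right-to-left lexicographic order on words. -/
def WordLt (w w' : Word) : Prop :=
  List.Lex SymbLt w.reverse w'.reverse

lemma insertAux_exists (x : ℕ+) (v : List (Option ℕ+)) :
    ∃ q ≤ v.length, insertAux x v = v.take q ++ some x :: v.drop q := by
  induction v with
  | nil => exact ⟨0, by simp, rfl⟩
  | cons a rest ih =>
    match a with
    | none => exact ⟨0, by simp, rfl⟩
    | some b =>
      obtain ⟨q, hq, heq⟩ := ih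
      exact ⟨q + 1, by simpa using hq, by simp [insertAux, heq]⟩

lemma insertAux_min (n : ℕ) (v : List (Option ℕ+))
    (hl : ∀ a : ℕ+, some a ∈ v → (a : ℕ) ≤ n) :
    ∀ q ≤ v.length,
      v.take q ++ some ⟨n + 1, Nat.succ_pos n⟩ :: v.drop q ≠
        insertAux ⟨n + 1, Nat.succ_pos n⟩ v →
      List.Lex SymbLt (insertAux ⟨n + 1, Nat.succ_pos n⟩ v)
        (v.take q ++ some ⟨n + 1, Nat.succ_pos n⟩ :: v.drop q) := by
  induction v with
  | nil =>
    intro q hq hne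
    have : q = 0 := Nat.le_zero.mp (by simpa using hq)
    subst this
    exact absurd rfl hne
  | cons a rest ih =>
    intro q hq hne
    match a with
    | none =>
      match q with
      | 0 => exact absurd rfl hne
      | q + 1 =>
        show List.Lex SymbLt (some _ :: _) (none :: _)
        exact List.Lex.rel trivial
    | some b =>
      have hb : (b : ℕ) ≤ n := hl b List.mem_cons_self
      match q with
      | 0 =>
        show List.Lex SymbLt (some b :: _) (some _ :: _)
        refine List.Lex.rel ?_
        show b < (⟨n + 1, Nat.succ_pos n⟩ : ℕ+)
        exact Nat.lt_succ_of_le hb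
      | q + 1 =>
        have hq' : q ≤ rest.length := by simpa using hq
        have hl' : ∀ a : ℕ+, some a ∈ rest → (a : ℕ) ≤ n :=
          fun a ha => hl a (List.mem_cons_of_mem _ ha)
        have hne' : rest.take q ++ some ⟨n + 1, Nat.succ_pos n⟩ :: rest.drop q ≠
            insertAux ⟨n + 1, Nat.succ_pos n⟩ rest := by
          intro h
          apply hne
          simp [insertAux, h]
        show List.Lex SymbLt (some b :: _) (some b :: _)
        exact List.Lex.cons (ih hl' q hq' hne')

lemma rev_insert {α : Type*} (l : List α) (x : α) (p : ℕ) :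
    (l.take p ++ x :: l.drop p).reverse =
      l.reverse.take (l.length - p) ++ x :: l.reverse.drop (l.length - p) := by
  rw [List.reverse_append, List.reverse_cons, List.reverse_drop, List.reverse_take]
  simp

/-- Let `n ≥ 0` and let `w` be a reduced word using letters from
`{1, …, n}` and placeholders. Among all words obtained from `w` by inserting the letter
`n+1` at some position, the word `insertLetter (n+1) w` — obtained by inserting `n+1`
immediately to the right of the rightmost placeholder of `w` if `w` contains one, and at
the left end of `w` otherwise — is one of them, and it is the unique minimal one with
respect to the right-to-left lexicographic order in which `ε` is greater than every
letter. -/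
theorem stmt_14 (n : ℕ) (w : Word) (hred : WordReduced w)
    (hletters : ∀ a : ℕ+, some a ∈ w → (a : ℕ) ≤ n) :
    (∃ p ≤ w.length,
        insertLetter ⟨n + 1, Nat.succ_pos n⟩ w =
          w.take p ++ some ⟨n + 1, Nat.succ_pos n⟩ :: w.drop p) ∧
      ∀ p ≤ w.length,
        w.take p ++ some ⟨n + 1, Nat.succ_pos n⟩ :: w.drop p ≠
            insertLetter ⟨n + 1, Nat.succ_pos n⟩ w →
          WordLt (insertLetter ⟨n + 1, Nat.succ_pos n⟩ w)
            (w.take p ++ some ⟨n + 1, Nat.succ_pos n⟩ :: w.drop p) := by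

  set x : ℕ+ := ⟨n + 1, Nat.succ_pos n⟩ with hx
  have hlv : ∀ a : ℕ+, some a ∈ w.reverse → (a : ℕ) ≤ n := by
    intro a ha
    exact hletters a (List.mem_reverse.mp ha)
  constructor
  · obtain ⟨q, hq, heq⟩ := insertAux_exists x w.reverse
    refine ⟨w.length - q, Nat.sub_le _ _, ?_⟩
    have hlen : w.reverse.length = w.length := List.length_reverse
    have h2 : (w.take (w.length - q) ++ some x :: w.drop (w.length - q)).reverse =
        w.reverse.take q ++ some x :: w.reverse.drop q := by
      rw [rev_insert]
      congr 1 <;> rw [Nat.sub_sub_self (by omega)]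
    have : insertLetter x w = (w.reverse.take q ++ some x :: w.reverse.drop q).reverse := by
      rw [insertLetter, heq]
    rw [this, ← h2, List.reverse_reverse]
  · intro p hp hne
    have hq : w.length - p ≤ w.reverse.length := by
      rw [List.length_reverse]; omega
    have h2 : (w.take p ++ some x :: w.drop p).reverse =
        w.reverse.take (w.length - p) ++ some x :: w.reverse.drop (w.length - p) :=
      rev_insert w (some x) p
    have hne' : w.reverse.take (w.length - p) ++ some x :: w.reverse.drop (w.length - p) ≠
        insertAux x w.reverse := by
      intro h
      apply hne
      have := congrArg List.reverse (h2.trans h)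
      rwa [List.reverse_reverse, ← insertLetter] at this
    have := insertAux_min n w.reverse hlv (w.length - p) hq hne'
    rw [WordLt, insertLetter, List.reverse_reverse, h2]
    exact this
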